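/- Let f : ℝⁿ → ℝ be convex and L-smooth (i.e., ∇f is L-Lipschitz), g : ℝⁿ → ℝ convex, and let x^{(t+1)} = argmin_x { g(x) + (L/2)‖x - (x^{(t)} - (1/L)∇f(x^{(t)}))‖² } be the proximal gradient iteration. Then for any minimizer x* of F = f + g, F(x^{(t)}) - F(x*) ≤ L‖x^{(0)} - x*‖² / (2t) for all t ≥ 1. -/

import Mathlib

open Set intervalIntegral

section Aux
variable {E : Type*} [NormedAddCommGroup E] [InnerProductSpace ℝ E] [CompleteSpace E]

local notation "⟪" a ", " b "⟫" => @inner ℝ _ _ a b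

private lemma ista_line_hasDerivAt {f : E → ℝ} (hf : Differentiable ℝ f) (x v : E) (s : ℝ) :
    HasDerivAt (fun s : ℝ => f (x + s • v)) ⟪gradient f (x + s • v), v⟫ s := by
  have hc : HasDerivAt (fun s : ℝ => x + s • v) v s := by
    simpa using ((hasDerivAt_id s).smul_const v).const_add x
  have hF := (hasGradientAt_iff_hasFDerivAt.mp (hf _).hasGradientAt).comp_hasDerivAt s hc
  simpa [InnerProductSpace.toDual_apply_apply, Function.comp_def] using hF

private lemma ista_convex_grad_ineq {f : E → ℝ} (hf : Differentiable ℝ f)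
    (hconv : ConvexOn ℝ Set.univ f) (x z : E) :
    f x + ⟪gradient f x, z - x⟫ ≤ f z := by
  set v := z - x with hv
  have heq : (fun s : ℝ => f (x + s • v)) = f ∘ (AffineMap.lineMap x z) := by
    ext s
    simp only [Function.comp_apply, AffineMap.lineMap_apply_module, hv]
    congr 1
    module
  have hphi : ConvexOn ℝ Set.univ (fun s : ℝ => f (x + s • v)) := by
    rw [heq]
    simpa using hconv.comp_affineMap (AffineMap.lineMap x z : ℝ →ᵃ[ℝ] E)
  have hd := ista_line_hasDerivAt hf x v 0
  simp only [zero_smul, add_zero] at hd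
  have hslope := hphi.le_slope_of_hasDerivAt (mem_univ 0) (mem_univ 1) one_pos hd
  simp [slope_def_field] at hslope
  have hxz : x + v = z := by rw [hv]; abel
  rw [hxz] at hslope
  have hgd : ⟪gradient f x, v⟫ = fderiv ℝ f x v := by
    simp [gradient, InnerProductSpace.toDual_symm_apply]
  linarith

private lemma ista_descent_lemma {f : E → ℝ} {L : ℝ} (hL : 0 < L) (hf : Differentiable ℝ f)
    (hsmooth : ∀ x y, ‖gradient f x - gradient f y‖ ≤ L * ‖x - y‖) (x v : E) :
    f (x + v) ≤ f x + ⟪gradient f x, v⟫ + L / 2 * ‖v‖ ^ 2 := by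
  have hgc : Continuous (gradient f) := by
    refine (LipschitzWith.of_dist_le_mul (K := L.toNNReal) fun a b => ?_).continuous
    simpa [dist_eq_norm, Real.coe_toNNReal _ hL.le] using hsmooth a b
  set d : ℝ → ℝ := fun s => ⟪gradient f (x + s • v), v⟫ with hd
  have hdc : Continuous d := by
    apply Continuous.inner
    · exact hgc.comp (by continuity)
    · exact continuous_const
  have hftc : ∫ s in (0:ℝ)..1, d s = f (x + (1:ℝ) • v) - f (x + (0:ℝ) • v) :=
    integral_eq_sub_of_hasDerivAt (fun s _ => ista_line_hasDerivAt hf x v s)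
      (hdc.intervalIntegrable 0 1)
  simp only [one_smul, zero_smul, add_zero] at hftc
  have hbound : ∀ s ∈ Icc (0:ℝ) 1, d s ≤ d 0 + (L * ‖v‖ ^ 2) * s := by
    intro s hs
    have h1 : d s - d 0 = ⟪gradient f (x + s • v) - gradient f x, v⟫ := by
      simp [hd, inner_sub_left, zero_smul, add_zero]
    have h2 : ⟪gradient f (x + s • v) - gradient f x, v⟫ ≤
        ‖gradient f (x + s • v) - gradient f x‖ * ‖v‖ := real_inner_le_norm _ _
    have h3 : ‖gradient f (x + s • v) - gradient f x‖ ≤ L * (s * ‖v‖) := by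
      have := hsmooth (x + s • v) x
      simpa [norm_smul, abs_of_nonneg hs.1] using this
    nlinarith [norm_nonneg v, hs.1]
  have hmono : ∫ s in (0:ℝ)..1, d s ≤ ∫ s in (0:ℝ)..1, (d 0 + (L * ‖v‖ ^ 2) * s) := by
    apply integral_mono_on (by norm_num) (hdc.intervalIntegrable 0 1)
    · exact (Continuous.intervalIntegrable (by continuity) 0 1)
    · exact hbound
  have hval : ∫ s in (0:ℝ)..1, (d 0 + (L * ‖v‖ ^ 2) * s) = d 0 + L * ‖v‖ ^ 2 / 2 := by
    rw [integral_add (g := fun s => L * ‖v‖ ^ 2 * s) intervalIntegrable_const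
      ((continuous_const.mul continuous_id').intervalIntegrable 0 1),
      integral_const_mul, integral_id, integral_const, smul_eq_mul]
    ring
  have hd0 : d 0 = ⟪gradient f x, v⟫ := by simp [hd]
  rw [hftc, hval, hd0] at hmono
  linarith

omit [CompleteSpace E] in
private lemma ista_prox_ineq {g : E → ℝ} (hg : ConvexOn ℝ Set.univ g) {L : ℝ} (hL : 0 < L)
    {p y : E}
    (hmin : ∀ z, g p + L / 2 * ‖p - y‖ ^ 2 ≤ g z + L / 2 * ‖z - y‖ ^ 2) (z : E) :
    g p + L * ⟪y - p, z - p⟫ ≤ g z := by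
  set w := z - p with hw
  set C := L / 2 * ‖w‖ ^ 2 with hC
  set a := g z - g p + L * ⟪p - y, w⟫ with ha
  have hCnn : 0 ≤ C := by positivity
  have key : ∀ s : ℝ, 0 < s → s ≤ 1 → -C * s ≤ a := by
    intro s hs0 hs1
    have hmin' := hmin (p + s • w)
    have hgs : g (p + s • w) ≤ (1 - s) * g p + s * g z := by
      have := hg.2 (mem_univ p) (mem_univ z) (by linarith : (0:ℝ) ≤ 1 - s) hs0.le
        (by ring : (1 - s) + s = 1)
      have hpt : (1 - s) • p + s • z = p + s • w := by rw [hw]; module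
      rw [hpt] at this
      simpa using this
    have hnorm : ‖p + s • w - y‖ ^ 2 = ‖p - y‖ ^ 2 + 2 * s * ⟪p - y, w⟫ + s ^ 2 * ‖w‖ ^ 2 := by
      have h1 : p + s • w - y = (p - y) + s • w := by abel
      rw [h1, @norm_add_sq_real, real_inner_smul_right, norm_smul]
      simp [abs_of_nonneg hs0.le]
      ring
    rw [hnorm] at hmin'
    have h2 : 0 ≤ s * a + C * s ^ 2 := by
      rw [ha, hC]
      nlinarith [hmin', hgs]
    nlinarith
  have haz : 0 ≤ a := by
    by_contra hneg
    push_neg at hneg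
    rcases eq_or_lt_of_le hCnn with hC0 | hC0
    · have := key 1 one_pos le_rfl
      rw [← hC0] at this
      linarith
    · have hs0 : 0 < min 1 (-a / (2 * C)) := by
        apply lt_min one_pos
        exact div_pos (by linarith) (by linarith)
      have := key _ hs0 (min_le_left _ _)
      have h3 : -C * min 1 (-a / (2 * C)) ≥ -C * (-a / (2 * C)) := by
        apply mul_le_mul_of_nonpos_left (min_le_right _ _) (by linarith)
      have h4 : -C * (-a / (2 * C)) = a / 2 := by field_simp
      linarith
  have hfin : ⟪y - p, w⟫ = -⟪p - y, w⟫ := by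
    rw [← inner_neg_left]; congr 1; abel
  rw [hw] at *
  rw [hfin]
  linarith [haz]

end Aux

/-- O(1/t) convergence of ISTA (Beck–Teboulle, Thm 3.1): for convex `L`-smooth `f`,
convex `g`, and the proximal gradient iteration
`x^{t+1} = argmin_z { g(z) + (L/2)‖z - (x^t - (1/L)∇f(x^t))‖² }`, any minimizer `x*` of
`F = f + g` satisfies `F(x^t) - F(x*) ≤ L‖x⁰ - x*‖²/(2t)` for all `t ≥ 1`. -/
theorem ista_convergence_rate {n : ℕ}
    (f g : EuclideanSpace ℝ (Fin n) → ℝ)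
    (L : ℝ) (hL : 0 < L)
    (hf : Differentiable ℝ f) (hfconv : ConvexOn ℝ Set.univ f)
    (hsmooth : ∀ x y, ‖gradient f x - gradient f y‖ ≤ L * ‖x - y‖)
    (hgconv : ConvexOn ℝ Set.univ g)
    (x : ℕ → EuclideanSpace ℝ (Fin n))
    (hiter : ∀ t, ∀ z,
      g (x (t + 1)) + (L / 2) * ‖x (t + 1) - (x t - (1 / L) • gradient f (x t))‖ ^ 2 ≤
        g z + (L / 2) * ‖z - (x t - (1 / L) • gradient f (x t))‖ ^ 2)
    (xstar : EuclideanSpace ℝ (Fin n))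
    (hstar : ∀ z, f xstar + g xstar ≤ f z + g z) :
    ∀ t : ℕ, 1 ≤ t →
      (f (x t) + g (x t)) - (f xstar + g xstar) ≤ L * ‖x 0 - xstar‖ ^ 2 / (2 * t) := by
  obtain ⟨F, hF⟩ : ∃ F : EuclideanSpace ℝ (Fin n) → ℝ, F = fun z => f z + g z := ⟨_, rfl⟩
  obtain ⟨Fs, hFs⟩ : ∃ Fs : ℝ, Fs = f xstar + g xstar := ⟨_, rfl⟩
  -- key per-step inequality
  have key : ∀ t : ℕ, ∀ z : EuclideanSpace ℝ (Fin n), F (x (t + 1)) ≤ F z + L / 2 * ‖x (t + 1) - x t‖ ^ 2 -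
      L * (inner ℝ (x t - x (t + 1)) (z - x (t + 1)) : ℝ) := by
    intro t z
    set u := x t with hu
    set p := x (t + 1) with hp
    set G := gradient f u with hG
    set y := u - (1 / L) • G with hy
    have hdesc := ista_descent_lemma hL hf hsmooth u (p - u)
    rw [add_sub_cancel] at hdesc
    have hconv := ista_convex_grad_ineq hf hfconv u z
    have hprox := ista_prox_ineq hgconv hL (fun z => hiter t z) z
    have hyp : y - p = (u - p) - (1 / L) • G := by rw [hy]; abel
    have hexp : L * (inner ℝ (y - p) (z - p) : ℝ) =
        L * (inner ℝ (u - p) (z - p) : ℝ) - (inner ℝ G (z - p) : ℝ) := by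
      rw [hyp, inner_sub_left, real_inner_smul_left]
      field_simp
    rw [hexp] at hprox
    have hlin : (inner ℝ G (p - u) : ℝ) - (inner ℝ G (z - u) : ℝ) + (inner ℝ G (z - p) : ℝ) = 0 := by
      rw [inner_sub_right, inner_sub_right, inner_sub_right]
      ring
    simp only [hF]
    simp only [hp, hu, hG, hy] at hdesc hconv hprox
    linarith
  -- F is decreasing along iterates
  have hdecr : ∀ t : ℕ, F (x (t + 1)) ≤ F (x t) := by
    intro t
    have h := key t (x t)
    have h1 : (inner ℝ (x t - x (t + 1)) (x t - x (t + 1)) : ℝ) = ‖x t - x (t + 1)‖ ^ 2 :=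
      real_inner_self_eq_norm_sq _
    have h2 : ‖x (t + 1) - x t‖ = ‖x t - x (t + 1)‖ := norm_sub_rev _ _
    rw [h1, h2] at h
    have hcalc : 0 ≤ L * ‖x t - x (t + 1)‖ ^ 2 :=
      mul_nonneg hL.le (sq_nonneg _)
    nlinarith [hcalc]
  have hmono' : ∀ k d : ℕ, F (x (k + d)) ≤ F (x k) := by
    intro k d
    induction d with
    | zero => exact le_rfl
    | succ d ih => exact le_trans (hdecr (k + d)) ih
  have hmono : ∀ k m : ℕ, k ≤ m → F (x m) ≤ F (x k) := by
    intro k m hkm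
    obtain ⟨d, rfl⟩ := Nat.exists_eq_add_of_le hkm
    exact hmono' k d
  -- per-step telescoping bound
  have hstep : ∀ t : ℕ, F (x (t + 1)) - Fs ≤
      L / 2 * (‖x t - xstar‖ ^ 2 - ‖x (t + 1) - xstar‖ ^ 2) := by
    intro t
    have h := key t xstar
    have hid : ‖x t - xstar‖ ^ 2 = ‖x t - x (t + 1)‖ ^ 2 +
        2 * (inner ℝ (x t - x (t + 1)) (x (t + 1) - xstar) : ℝ) + ‖x (t + 1) - xstar‖ ^ 2 := by
      have h1 : x t - xstar = (x t - x (t + 1)) + (x (t + 1) - xstar) := by abel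
      rw [h1, @norm_add_sq_real]
    have h3 : (inner ℝ (x t - x (t + 1)) (xstar - x (t + 1)) : ℝ) =
        -(inner ℝ (x t - x (t + 1)) (x (t + 1) - xstar) : ℝ) := by
      rw [← inner_neg_right]; congr 1; abel
    have h2 : ‖x (t + 1) - x t‖ = ‖x t - x (t + 1)‖ := norm_sub_rev _ _
    rw [h3, h2] at h
    have hFsxs : F xstar = Fs := by rw [hF, hFs]
    rw [hFsxs] at h
    nlinarith
  -- summation
  have hsum : ∀ t : ℕ, ∑ k ∈ Finset.range t, (F (x (k + 1)) - Fs) ≤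
      L / 2 * (‖x 0 - xstar‖ ^ 2 - ‖x t - xstar‖ ^ 2) := by
    intro t
    induction t with
    | zero => simp
    | succ t ih =>
      rw [Finset.sum_range_succ]
      have := hstep t
      linarith
  intro t ht
  have htpos : (0:ℝ) < t := by exact_mod_cast ht
  have hlb : (t : ℝ) * (F (x t) - Fs) ≤ ∑ k ∈ Finset.range t, (F (x (k + 1)) - Fs) := by
    have hterm : ∀ k ∈ Finset.range t, F (x t) - Fs ≤ F (x (k + 1)) - Fs := by
      intro k hk
      have := hmono (k + 1) t (Finset.mem_range.mp hk)
      linarith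
    have := Finset.card_nsmul_le_sum (Finset.range t) (fun k => F (x (k + 1)) - Fs)
      (F (x t) - Fs) hterm
    simpa [nsmul_eq_mul] using this
  have hub := (hlb.trans (hsum t)).trans (by nlinarith [sq_nonneg ‖x t - xstar‖] :
    L / 2 * (‖x 0 - xstar‖ ^ 2 - ‖x t - xstar‖ ^ 2) ≤ L / 2 * ‖x 0 - xstar‖ ^ 2)
  have main : F (x t) - Fs ≤ L * ‖x 0 - xstar‖ ^ 2 / (2 * t) := by
    rw [le_div_iff₀ (by positivity)]
    nlinarith [hub]
  simp only [hF, hFs] at main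
  exact main
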